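/- Let 0 < S₀ ≤ S₁ and define S_opt : [0,1] → ℝ by S_opt(x) = S₀ for 0 ≤ x ≤ 1/2, S_opt(x) = S₀/(2(1−x)) for 1/2 < x < 1 − S₀/(2S₁), and S_opt(x) = S₁ for 1 − S₀/(2S₁) ≤ x ≤ 1. Then the supremum of F[S] := (1/2)(∫₀¹ S dx)² / ∫₀¹ (1−x)S² dx over all measurable S : [0,1] → ℝ with S₀ ≤ S(x) ≤ S₁ equals 1 + (1/2)·log(S₁/S₀), and this supremum is attained by S_opt. -/

import Mathlib

open MeasureTheory intervalIntegral Set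


lemma intInt_of_bddOn {f : ℝ → ℝ} {C p q : ℝ} (hm : Measurable f)
    (hb : ∀ x ∈ Set.uIoc p q, |f x| ≤ C) : IntervalIntegrable f volume p q := by
  rw [intervalIntegrable_iff]
  apply Integrable.mono' (g := fun _ => C) (integrableOn_const measure_Ioc_lt_top.ne)
  · exact hm.aestronglyMeasurable
  · exact (ae_restrict_mem measurableSet_uIoc).mono fun x hx => hb x hx

lemma integral_one_sub (p q : ℝ) :
    ∫ x in p..q, (1 - x) = (q - q^2/2) - (p - p^2/2) := by
  apply intervalIntegral.integral_eq_sub_of_hasDerivAt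
  · intro x hx
    have h : HasDerivAt (fun x : ℝ => x - x^2/2) (1 - x) x := by
      have := (hasDerivAt_id x).sub ((hasDerivAt_pow 2 x).div_const 2)
      exact this.congr_deriv (by norm_num)
    exact h
  · exact (continuous_const.sub continuous_id).intervalIntegrable _ _

lemma integral_inv_one_sub {p q : ℝ} (hp : p < 1) (hq : q < 1) :
    ∫ x in p..q, 1/(1-x) = Real.log (1-p) - Real.log (1-q) := by
  have key : ∫ x in p..q, 1/(1-x) = (-Real.log (1-q)) - (-Real.log (1-p)) := by
    apply intervalIntegral.integral_eq_sub_of_hasDerivAt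
    · intro x hx
      have hx1 : 0 < 1 - x := by
        have := hx.2
        have : x ≤ max p q := this
        have := max_lt hp hq
        linarith
      have h1 : HasDerivAt (fun x : ℝ => 1 - x) (-1) x := by
        exact (hasDerivAt_id x).const_sub 1
      have h2 : HasDerivAt (fun x : ℝ => Real.log (1 - x)) ((1-x)⁻¹ * (-1)) x :=
        (Real.hasDerivAt_log hx1.ne').comp x h1
      have h3 := h2.neg
      exact h3.congr_deriv (by ring)
    · apply ContinuousOn.intervalIntegrable
      apply ContinuousOn.div continuousOn_const (continuous_const.sub continuous_id).continuousOn
      intro x hx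
      have hx2 : x ≤ max p q := hx.2
      have := max_lt hp hq
      intro h; simp at h; linarith
  linarith

lemma integral_lin (c d p q : ℝ) :
    ∫ x in p..q, (c - d*(1-x)) = c*(q-p) - d*((q - q^2/2) - (p - p^2/2)) := by
  rw [intervalIntegral.integral_sub intervalIntegrable_const
      (Continuous.intervalIntegrable (by fun_prop) _ _),
    intervalIntegral.integral_const_mul, integral_one_sub, intervalIntegral.integral_const]
  simp [smul_eq_mul]; ring

lemma final_A (S₀ a L l : ℝ) (hla : l = 2*S₀*(1-a)) :
    l*S₀*a - S₀^2*(a - a^2/2) + l^2/4*L + 3*l^2/8 ≤ (1 + (1/2)*L)*l^2/2 := by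
  subst hla; nlinarith [sq_nonneg (S₀*(2*a-1))]

set_option maxHeartbeats 2000000 in
lemma key_ineq (S₀ S₁ l : ℝ) (hS₀ : 0 < S₀) (h01 : S₀ ≤ S₁) (hl : 0 < l) (hl2 : l ≤ 2*S₁)
    (S : ℝ → ℝ) (hm : Measurable S) (hb : ∀ x ∈ Set.Icc (0:ℝ) 1, S₀ ≤ S x ∧ S x ≤ S₁) :
    l * (∫ x in (0:ℝ)..1, S x) ≤ (∫ x in (0:ℝ)..1, (1-x) * S x^2)
      + (1 + (1/2) * Real.log (S₁/S₀)) * l^2 / 2 := by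
  have hS₁ : 0 < S₁ := lt_of_lt_of_le hS₀ h01
  set L := Real.log (S₁/S₀) with hLdef
  set G : ℝ → ℝ := fun x => l * S x - (1-x) * S x^2 with hGdef
  -- integrability of G on subintervals of [0,1]
  have hGint : ∀ p q : ℝ, 0 ≤ p → q ≤ 1 → p ≤ q → IntervalIntegrable G volume p q := by
    intro p q hp hq hpq
    apply intInt_of_bddOn (C := l*S₁ + S₁^2)
    · exact (measurable_const.mul hm).sub
        ((measurable_const.sub measurable_id).mul (hm.pow measurable_const))
    · intro x hx
      rw [Set.uIoc_of_le hpq] at hx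
      have hx01 : x ∈ Set.Icc (0:ℝ) 1 := ⟨le_trans hp hx.1.le, le_trans hx.2 hq⟩
      obtain ⟨h1s, h2s⟩ := hb x hx01
      have h0s : 0 ≤ S x := le_trans hS₀.le h1s
      have hxa : 0 ≤ 1 - x := by linarith [hx01.2]
      have hxb : 1 - x ≤ 1 := by linarith [hx01.1]
      have hsq : S x^2 ≤ S₁^2 := by nlinarith
      have h2 : (1-x) * S x^2 ≤ S₁^2 := by nlinarith [sq_nonneg (S x)]
      have h3 : l * S x ≤ l * S₁ := by nlinarith
      have hGx : G x = l * S x - (1-x) * S x^2 := rfl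
      rw [abs_le, hGx]
      constructor
      · nlinarith [mul_nonneg hl.le h0s, mul_nonneg hl.le hS₁.le]
      · nlinarith [mul_nonneg hxa (sq_nonneg (S x)), mul_nonneg hl.le hS₁.le]
  have hSint : IntervalIntegrable S volume 0 1 := by
    apply intInt_of_bddOn (C := S₁) hm
    intro x hx
    rw [Set.uIoc_of_le (by norm_num : (0:ℝ) ≤ 1)] at hx
    obtain ⟨h1s, h2s⟩ := hb x ⟨hx.1.le, hx.2⟩
    rw [abs_le]; constructor <;> linarith
  have hWint : IntervalIntegrable (fun x => (1-x) * S x^2) volume 0 1 := by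
    apply intInt_of_bddOn (C := S₁^2)
    · exact (measurable_const.sub measurable_id).mul (hm.pow measurable_const)
    · intro x hx
      rw [Set.uIoc_of_le (by norm_num : (0:ℝ) ≤ 1)] at hx
      have hxx1 := hx.1
      have hxx2 := hx.2
      obtain ⟨h1s, h2s⟩ := hb x ⟨hxx1.le, hxx2⟩
      have h0s : 0 ≤ S x := le_trans hS₀.le h1s
      rw [abs_le]; constructor <;> nlinarith [mul_nonneg (by linarith : (0:ℝ) ≤ 1-x) (sq_nonneg (S x))]
  -- reduce to bounding ∫ G
  suffices hMain : ∫ x in (0:ℝ)..1, G x ≤ (1 + (1/2)*L) * l^2 / 2 by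
    have hsplit : ∫ x in (0:ℝ)..1, G x
        = l * (∫ x in (0:ℝ)..1, S x) - ∫ x in (0:ℝ)..1, (1-x) * S x^2 := by
      rw [hGdef]
      rw [intervalIntegral.integral_sub (hSint.const_mul l) hWint,
        intervalIntegral.integral_const_mul]
    have : (1 + (1/2)*L) * l^2/2 = (1 + (1/2) * Real.log (S₁/S₀)) * l^2 / 2 := by rw [hLdef]
    linarith [hMain, hsplit.symm.le]
  -- split at b
  set b : ℝ := 1 - l/(2*S₁) with hbdef
  have hb1 : b < 1 := by
    have : 0 < l/(2*S₁) := by positivity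
    rw [hbdef]; linarith
  have hb0 : 0 ≤ b := by
    have : l/(2*S₁) ≤ 1 := by rw [div_le_one (by positivity)]; linarith
    rw [hbdef]; linarith
  have h1b : 1 - b = l/(2*S₁) := by rw [hbdef]; ring
  -- bound on [b,1]
  have hIb1 : ∫ x in b..1, G x ≤ 3*l^2/8 := by
    have hmono : ∫ x in b..1, G x ≤ ∫ x in b..1, (l*S₁ - S₁^2*(1-x)) := by
      apply intervalIntegral.integral_mono_on hb1.le (hGint b 1 hb0 le_rfl hb1.le)
        (Continuous.intervalIntegrable (by fun_prop) _ _)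
      intro x hx
      obtain ⟨h1s, h2s⟩ := hb x ⟨le_trans hb0 hx.1, hx.2⟩
      have h0s : 0 ≤ S x := le_trans hS₀.le h1s
      have hx2 : 0 ≤ 1 - x := by linarith [hx.2]
      have hx1 : 1 - x ≤ l/(2*S₁) := by
        have := hx.1; rw [hbdef] at this; linarith
      have key1 : (1-x)*(S₁ + S x) ≤ l := by
        have h' : (1-x)*(S₁+S x) ≤ (l/(2*S₁))*(2*S₁) :=
          mul_le_mul hx1 (by linarith) (by linarith) (by positivity)
        rwa [div_mul_cancel₀ _ (by positivity : (2*S₁:ℝ) ≠ 0)] at h'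
      show l * S x - (1-x) * S x^2 ≤ l*S₁ - S₁^2*(1-x)
      nlinarith [mul_nonneg (by linarith : 0 ≤ S₁ - S x) (by linarith : 0 ≤ l - (1-x)*(S₁ + S x))]
    have hcomp : ∫ x in b..1, (l*S₁ - S₁^2*(1-x)) = 3*l^2/8 := by
      rw [integral_lin]
      rw [hbdef]; field_simp; ring
    linarith
  have hsplitb : ∫ x in (0:ℝ)..1, G x = (∫ x in (0:ℝ)..b, G x) + ∫ x in b..1, G x :=
    (intervalIntegral.integral_add_adjacent_intervals
      (hGint 0 b le_rfl hb1.le hb0) (hGint b 1 hb0 le_rfl hb1.le)).symm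
  by_cases hcase : l ≤ 2*S₀
  · -- case A
    set a : ℝ := 1 - l/(2*S₀) with hadef
    have ha0 : 0 ≤ a := by
      have : l/(2*S₀) ≤ 1 := by rw [div_le_one (by positivity)]; linarith
      rw [hadef]; linarith
    have ha1 : a < 1 := by
      have : 0 < l/(2*S₀) := by positivity
      rw [hadef]; linarith
    have hab : a ≤ b := by
      have : l/(2*S₁) ≤ l/(2*S₀) := by gcongr
      rw [hadef, hbdef]; linarith
    have h1a : 1 - a = l/(2*S₀) := by rw [hadef]; ring
    have hsplita : ∫ x in (0:ℝ)..b, G x = (∫ x in (0:ℝ)..a, G x) + ∫ x in a..b, G x :=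
      (intervalIntegral.integral_add_adjacent_intervals
        (hGint 0 a le_rfl (le_trans hab hb1.le) ha0)
        (hGint a b ha0 hb1.le hab)).symm
    have hI1 : ∫ x in (0:ℝ)..a, G x ≤ l*S₀*a - S₀^2*(a - a^2/2) := by
      have hmono : ∫ x in (0:ℝ)..a, G x ≤ ∫ x in (0:ℝ)..a, (l*S₀ - S₀^2*(1-x)) := by
        apply intervalIntegral.integral_mono_on ha0 (hGint 0 a le_rfl (le_trans hab hb1.le) ha0)
          (Continuous.intervalIntegrable (by fun_prop) _ _)
        intro x hx
        obtain ⟨h1s, h2s⟩ := hb x ⟨hx.1, le_trans hx.2 ha1.le⟩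
        have hx1 : l/(2*S₀) ≤ 1 - x := by
          have := hx.2; rw [hadef] at this; linarith
        have hx2 : 0 ≤ 1 - x := le_trans (by positivity) hx1
        have key1 : l ≤ (1-x)*(S₀ + S x) := by
          have h' : (l/(2*S₀))*(2*S₀) ≤ (1-x)*(S₀+S x) :=
            mul_le_mul hx1 (by linarith) (by positivity) hx2
          rwa [div_mul_cancel₀ _ (by positivity : (2*S₀:ℝ) ≠ 0)] at h'
        show l * S x - (1-x) * S x^2 ≤ l*S₀ - S₀^2*(1-x)
        nlinarith [mul_nonneg (by linarith : 0 ≤ S x - S₀) (by linarith : 0 ≤ (1-x)*(S₀ + S x) - l)]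
      have hcomp : ∫ x in (0:ℝ)..a, (l*S₀ - S₀^2*(1-x)) = l*S₀*a - S₀^2*(a - a^2/2) := by
        rw [integral_lin]; ring
      linarith
    have hI2 : ∫ x in a..b, G x ≤ l^2/4 * L := by
      have hmono : ∫ x in a..b, G x ≤ ∫ x in a..b, (l^2/4 * (1/(1-x))) := by
        apply intervalIntegral.integral_mono_on hab (hGint a b ha0 hb1.le hab)
        · apply ContinuousOn.intervalIntegrable
          apply ContinuousOn.mul continuousOn_const
          apply ContinuousOn.div continuousOn_const (by fun_prop)
          intro x hx
          rw [Set.uIcc_of_le hab] at hx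
          have : x ≤ b := hx.2
          intro h; have : (1:ℝ) - x = 0 := h; linarith [hb1]
        · intro x hx
          obtain ⟨h1s, h2s⟩ := hb x ⟨le_trans ha0 hx.1, le_trans hx.2 hb1.le⟩
          have hx1 : 0 < 1 - x := by linarith [hx.2, hb1]
          show l * S x - (1-x) * S x^2 ≤ l^2/4 * (1/(1-x))
          rw [mul_one_div, le_div_iff₀ hx1]
          nlinarith [sq_nonneg (l - 2*(1-x)*S x)]
      have hcomp : ∫ x in a..b, (l^2/4 * (1/(1-x))) = l^2/4 * L := by
        rw [intervalIntegral.integral_const_mul, integral_inv_one_sub ha1 hb1, h1a, h1b]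
        congr 1
        rw [Real.log_div hl.ne' (by positivity), Real.log_div hl.ne' (by positivity),
          Real.log_mul (by norm_num) hS₀.ne', Real.log_mul (by norm_num) hS₁.ne',
          hLdef, Real.log_div hS₁.ne' hS₀.ne']
        ring
      linarith
    have hfin : l*S₀*a - S₀^2*(a - a^2/2) + l^2/4*L + 3*l^2/8 ≤ (1 + (1/2)*L)*l^2/2 := by
      have hla : l = 2*S₀*(1-a) := by
        rw [h1a]; field_simp
      exact final_A S₀ a L l hla
    rw [hsplitb, hsplita]
    linarith
  · -- case B : 2*S₀ < l
    push_neg at hcase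
    have hI1 : ∫ x in (0:ℝ)..b, G x ≤ l^2/4 * (Real.log 1 - Real.log (l/(2*S₁))) := by
      have hmono : ∫ x in (0:ℝ)..b, G x ≤ ∫ x in (0:ℝ)..b, (l^2/4 * (1/(1-x))) := by
        apply intervalIntegral.integral_mono_on hb0 (hGint 0 b le_rfl hb1.le hb0)
        · apply ContinuousOn.intervalIntegrable
          apply ContinuousOn.mul continuousOn_const
          apply ContinuousOn.div continuousOn_const (by fun_prop)
          intro x hx
          rw [Set.uIcc_of_le hb0] at hx
          intro h; have : (1:ℝ) - x = 0 := h; linarith [hx.2, hb1]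
        · intro x hx
          obtain ⟨h1s, h2s⟩ := hb x ⟨hx.1, le_trans hx.2 hb1.le⟩
          have hx1 : 0 < 1 - x := by linarith [hx.2, hb1]
          show l * S x - (1-x) * S x^2 ≤ l^2/4 * (1/(1-x))
          rw [mul_one_div, le_div_iff₀ hx1]
          nlinarith [sq_nonneg (l - 2*(1-x)*S x)]
      have hcomp : ∫ x in (0:ℝ)..b, (l^2/4 * (1/(1-x))) = l^2/4 * (Real.log 1 - Real.log (l/(2*S₁))) := by
        rw [intervalIntegral.integral_const_mul, integral_inv_one_sub (by norm_num) hb1, h1b]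
        norm_num
      linarith
    have hsc : 0 ≤ L + Real.log (l/(2*S₁)) + 1/2 := by
      have h1 : 0 ≤ Real.log (l/(2*S₀)) :=
        Real.log_nonneg (by rw [le_div_iff₀ (by positivity)]; linarith)
      rw [Real.log_div hl.ne' (by positivity : (2*S₀:ℝ) ≠ 0),
        Real.log_mul (by norm_num) hS₀.ne'] at h1
      rw [hLdef, Real.log_div hS₁.ne' hS₀.ne',
        Real.log_div hl.ne' (by positivity : (2*S₁:ℝ) ≠ 0),
        Real.log_mul (by norm_num) hS₁.ne']
      linarith
    rw [hsplitb]
    have hL1 : Real.log 1 = 0 := Real.log_one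
    nlinarith [mul_nonneg (sq_nonneg l) hsc, hIb1, hI1]

lemma integral_one_sub_mul (c p q : ℝ) :
    ∫ x in p..q, (1-x)*c = ((q - q^2/2) - (p - p^2/2)) * c := by
  rw [intervalIntegral.integral_mul_const, integral_one_sub]

/-- The functional `F[S] = (1/2)(∫₀¹ S dx)² / ∫₀¹ (1−x) S² dx`. -/
noncomputable def coolingFunctional (S : ℝ → ℝ) : ℝ :=
  (1/2) * (∫ x in (0:ℝ)..1, S x)^2 / ∫ x in (0:ℝ)..1, (1 - x) * (S x)^2

/-- The optimal Seebeck profile. -/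
noncomputable def Sopt (S₀ S₁ : ℝ) (x : ℝ) : ℝ :=
  if x ≤ 1/2 then S₀
  else if x < 1 - S₀ / (2 * S₁) then S₀ / (2 * (1 - x))
  else S₁

set_option maxHeartbeats 4000000 in
theorem sup_cooling_functional (S₀ S₁ : ℝ) (hS₀ : 0 < S₀) (hS₀S₁ : S₀ ≤ S₁) :
    IsGreatest {y : ℝ | ∃ S : ℝ → ℝ, Measurable S ∧
        (∀ x ∈ Set.Icc (0:ℝ) 1, S₀ ≤ S x ∧ S x ≤ S₁) ∧ y = coolingFunctional S}
      (1 + (1/2) * Real.log (S₁ / S₀)) ∧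
    coolingFunctional (Sopt S₀ S₁) = 1 + (1/2) * Real.log (S₁ / S₀) := by
  have hS₁ : 0 < S₁ := lt_of_lt_of_le hS₀ hS₀S₁
  set L := Real.log (S₁ / S₀) with hLdef
  have hL0 : 0 ≤ L := Real.log_nonneg ((one_le_div hS₀).2 hS₀S₁)
  have hM0 : (0:ℝ) < 1 + (1/2)*L := by linarith
  set b₀ : ℝ := 1 - S₀ / (2 * S₁) with hb₀def
  have h1b₀ : 1 - b₀ = S₀/(2*S₁) := by rw [hb₀def]; ring
  have h12b : (1/2:ℝ) ≤ b₀ := by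
    have : S₀/(2*S₁) ≤ 1/2 := by rw [div_le_iff₀ (by positivity)]; linarith
    rw [hb₀def]; linarith
  have hb₀1 : b₀ < 1 := by
    have : (0:ℝ) < S₀/(2*S₁) := by positivity
    rw [hb₀def]; linarith
  -- bounds of Sopt
  have hmem : ∀ x : ℝ, S₀ ≤ Sopt S₀ S₁ x ∧ Sopt S₀ S₁ x ≤ S₁ := by
    intro x
    unfold Sopt
    split_ifs with h1 h2
    · exact ⟨le_rfl, hS₀S₁⟩
    · push_neg at h1
      rw [← hb₀def] at h2
      have hgt : S₀/(2*S₁) < 1 - x := by rw [hb₀def] at h2; linarith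
      have hx1 : 0 < 1 - x := lt_trans (by positivity) hgt
      constructor
      · rw [le_div_iff₀ (by positivity)]; nlinarith
      · rw [div_le_iff₀ (by positivity)]
        have := (div_lt_iff₀ (by positivity : (0:ℝ) < 2*S₁)).1 hgt
        nlinarith
    · exact ⟨hS₀S₁, le_rfl⟩
  -- measurability of Sopt
  have hmeas : Measurable (Sopt S₀ S₁) := by
    unfold Sopt
    apply Measurable.ite (measurableSet_le measurable_id measurable_const) measurable_const
    apply Measurable.ite (measurableSet_lt measurable_id measurable_const) _ measurable_const
    exact measurable_const.div ((measurable_const.sub measurable_id).const_mul 2)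
  have hoptInt : ∀ p q : ℝ, IntervalIntegrable (Sopt S₀ S₁) volume p q := by
    intro p q
    apply intInt_of_bddOn (C := S₁) hmeas
    intro x _
    obtain ⟨ha, hbb⟩ := hmem x
    rw [abs_le]; constructor <;> linarith
  have hoptWInt : ∀ p q : ℝ, 0 ≤ p → q ≤ 1 → p ≤ q →
      IntervalIntegrable (fun x => (1-x)*(Sopt S₀ S₁ x)^2) volume p q := by
    intro p q hp hq hpq
    apply intInt_of_bddOn (C := S₁^2)
    · exact (measurable_const.sub measurable_id).mul (hmeas.pow measurable_const)
    · intro x hx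
      rw [Set.uIoc_of_le hpq] at hx
      have hx0 : 0 ≤ x := le_trans hp hx.1.le
      have hx1 : x ≤ 1 := le_trans hx.2 hq
      obtain ⟨ha, hbb⟩ := hmem x
      have h0 : 0 ≤ Sopt S₀ S₁ x := le_trans hS₀.le ha
      have hsq : (Sopt S₀ S₁ x)^2 ≤ S₁^2 := by nlinarith
      rw [abs_le]
      constructor <;> nlinarith [mul_nonneg (by linarith : (0:ℝ) ≤ 1-x) (sq_nonneg (Sopt S₀ S₁ x))]
  -- log identity
  have hlogeq : Real.log (1 - 1/2) - Real.log (S₀/(2*S₁)) = L := by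
    rw [show (1:ℝ) - 1/2 = 1/2 by norm_num,
      ← Real.log_div (by norm_num) (by positivity : S₀/(2*S₁) ≠ 0)]
    rw [hLdef]
    congr 1
    field_simp
  -- piece 1 of I
  have hP1 : ∫ x in (0:ℝ)..(1/2), Sopt S₀ S₁ x = S₀/2 := by
    rw [intervalIntegral.integral_congr (g := fun _ => S₀) ?_, intervalIntegral.integral_const]
    · norm_num; ring
    · intro x hx
      rw [Set.uIcc_of_le (by norm_num : (0:ℝ) ≤ 1/2)] at hx
      simp only [Sopt]
      rw [if_pos hx.2]
  -- piece 2 of I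
  have hP2 : ∫ x in (1/2:ℝ)..b₀, Sopt S₀ S₁ x = S₀/2 * L := by
    rw [intervalIntegral.integral_congr (g := fun x => S₀/2 * (1/(1-x))) ?_,
      intervalIntegral.integral_const_mul, integral_inv_one_sub (by norm_num) hb₀1, h1b₀, hlogeq]
    intro x hx
    rw [Set.uIcc_of_le h12b] at hx
    obtain ⟨hxl, hxr⟩ := hx
    simp only [Sopt]
    split_ifs with h1 h2
    · have hx12 : x = 1/2 := le_antisymm h1 hxl
      subst hx12; norm_num
    · rw [mul_one_div, div_div]
    · rw [← hb₀def] at h2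
      have hxb : x = b₀ := le_antisymm hxr (not_lt.1 h2)
      subst hxb
      rw [h1b₀]
      field_simp
  -- piece 3 of I
  have hP3 : ∫ x in b₀..(1:ℝ), Sopt S₀ S₁ x = S₀/2 := by
    rw [intervalIntegral.integral_congr (g := fun _ => S₁) ?_, intervalIntegral.integral_const]
    · rw [smul_eq_mul, show (1:ℝ) - b₀ = S₀/(2*S₁) from h1b₀]
      field_simp
    · intro x hx
      rw [Set.uIcc_of_le hb₀1.le] at hx
      obtain ⟨hxl, hxr⟩ := hx
      simp only [Sopt]
      split_ifs with h1 h2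
      · -- degenerate: x ≤ 1/2 and b₀ ≤ x forces b₀ = 1/2, S₀ = S₁
        have hb12 : b₀ = 1/2 := le_antisymm (le_trans hxl h1) h12b
        have : S₀/(2*S₁) = 1/2 := by rw [hb₀def] at hb12; linarith
        have : S₀ = S₁ := by
          field_simp at this; linarith
        exact this
      · rw [← hb₀def] at h2
        exact absurd h2 (not_lt.2 hxl)
      · rfl
  -- piece 1 of J
  have hQ1 : ∫ x in (0:ℝ)..(1/2), (1-x)*(Sopt S₀ S₁ x)^2 = 3*S₀^2/8 := by
    rw [intervalIntegral.integral_congr (g := fun x => (1-x)*S₀^2) ?_, integral_one_sub_mul]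
    · norm_num; ring
    · intro x hx
      rw [Set.uIcc_of_le (by norm_num : (0:ℝ) ≤ 1/2)] at hx
      simp only [Sopt]
      rw [if_pos hx.2]
  -- piece 2 of J
  have hQ2 : ∫ x in (1/2:ℝ)..b₀, (1-x)*(Sopt S₀ S₁ x)^2 = S₀^2/4 * L := by
    rw [intervalIntegral.integral_congr (g := fun x => S₀^2/4 * (1/(1-x))) ?_,
      intervalIntegral.integral_const_mul, integral_inv_one_sub (by norm_num) hb₀1, h1b₀, hlogeq]
    intro x hx
    rw [Set.uIcc_of_le h12b] at hx
    obtain ⟨hxl, hxr⟩ := hx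
    simp only [Sopt]
    split_ifs with h1 h2
    · have hx12 : x = 1/2 := le_antisymm h1 hxl
      subst hx12; norm_num; ring
    · have hx1 : 0 < 1 - x := by linarith [lt_of_le_of_lt hxr hb₀1]
      field_simp
      ring
    · rw [← hb₀def] at h2
      have hxb : x = b₀ := le_antisymm hxr (not_lt.1 h2)
      subst hxb
      rw [h1b₀]
      field_simp
      ring
  -- piece 3 of J
  have hQ3 : ∫ x in b₀..(1:ℝ), (1-x)*(Sopt S₀ S₁ x)^2 = S₀^2/8 := by
    rw [intervalIntegral.integral_congr (g := fun x => (1-x)*S₁^2) ?_, integral_one_sub_mul]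
    · rw [hb₀def]; field_simp; ring
    · intro x hx
      rw [Set.uIcc_of_le hb₀1.le] at hx
      obtain ⟨hxl, hxr⟩ := hx
      simp only [Sopt]
      split_ifs with h1 h2
      · have hb12 : b₀ = 1/2 := le_antisymm (le_trans hxl h1) h12b
        have h' : S₀/(2*S₁) = 1/2 := by rw [hb₀def] at hb12; linarith
        have hSS : S₀ = S₁ := by field_simp at h'; linarith
        rw [hSS]
      · rw [← hb₀def] at h2
        exact absurd h2 (not_lt.2 hxl)
      · rfl
  -- totals
  have hIeq : ∫ x in (0:ℝ)..1, Sopt S₀ S₁ x = S₀ * (1 + (1/2)*L) := by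
    have h1 : ∫ x in (0:ℝ)..b₀, Sopt S₀ S₁ x
        = (∫ x in (0:ℝ)..(1/2), Sopt S₀ S₁ x) + ∫ x in (1/2:ℝ)..b₀, Sopt S₀ S₁ x :=
      (intervalIntegral.integral_add_adjacent_intervals (hoptInt 0 (1/2)) (hoptInt (1/2) b₀)).symm
    have h2 : ∫ x in (0:ℝ)..1, Sopt S₀ S₁ x
        = (∫ x in (0:ℝ)..b₀, Sopt S₀ S₁ x) + ∫ x in b₀..(1:ℝ), Sopt S₀ S₁ x :=
      (intervalIntegral.integral_add_adjacent_intervals (hoptInt 0 b₀) (hoptInt b₀ 1)).symm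
    rw [h2, h1, hP1, hP2, hP3]; ring
  have hJeq : ∫ x in (0:ℝ)..1, (1-x)*(Sopt S₀ S₁ x)^2 = S₀^2 * (1 + (1/2)*L) / 2 := by
    have h1 : ∫ x in (0:ℝ)..b₀, (1-x)*(Sopt S₀ S₁ x)^2
        = (∫ x in (0:ℝ)..(1/2), (1-x)*(Sopt S₀ S₁ x)^2)
          + ∫ x in (1/2:ℝ)..b₀, (1-x)*(Sopt S₀ S₁ x)^2 :=
      (intervalIntegral.integral_add_adjacent_intervals
        (hoptWInt 0 (1/2) le_rfl (by norm_num) (by norm_num))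
        (hoptWInt (1/2) b₀ (by norm_num) hb₀1.le h12b)).symm
    have h2 : ∫ x in (0:ℝ)..1, (1-x)*(Sopt S₀ S₁ x)^2
        = (∫ x in (0:ℝ)..b₀, (1-x)*(Sopt S₀ S₁ x)^2)
          + ∫ x in b₀..(1:ℝ), (1-x)*(Sopt S₀ S₁ x)^2 :=
      (intervalIntegral.integral_add_adjacent_intervals
        (hoptWInt 0 b₀ le_rfl hb₀1.le (le_trans (by norm_num) h12b))
        (hoptWInt b₀ 1 (le_trans (by norm_num) h12b) le_rfl hb₀1.le)).symm
    rw [h2, h1, hQ1, hQ2, hQ3]; ring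
  have hval : coolingFunctional (Sopt S₀ S₁) = 1 + (1/2)*L := by
    unfold coolingFunctional
    rw [hIeq, hJeq]
    rw [div_eq_iff (by positivity : S₀^2 * (1 + (1/2)*L)/2 ≠ 0)]
    ring
  refine ⟨⟨⟨Sopt S₀ S₁, hmeas, fun x _ => hmem x, hval.symm⟩, ?_⟩, hval⟩
  rintro y ⟨S, hm, hbnd, rfl⟩
  show coolingFunctional S ≤ 1 + (1/2)*L
  -- integrability of S and weight
  have hSint : IntervalIntegrable S volume 0 1 := by
    apply intInt_of_bddOn (C := S₁) hm
    intro x hx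
    rw [Set.uIoc_of_le (by norm_num : (0:ℝ) ≤ 1)] at hx
    obtain ⟨h1s, h2s⟩ := hbnd x ⟨hx.1.le, hx.2⟩
    rw [abs_le]; constructor <;> linarith
  have hWint : IntervalIntegrable (fun x => (1-x) * (S x)^2) volume 0 1 := by
    apply intInt_of_bddOn (C := S₁^2)
    · exact (measurable_const.sub measurable_id).mul (hm.pow measurable_const)
    · intro x hx
      rw [Set.uIoc_of_le (by norm_num : (0:ℝ) ≤ 1)] at hx
      have hx0 := hx.1.le
      have hx1 := hx.2
      obtain ⟨h1s, h2s⟩ := hbnd x ⟨hx0, hx1⟩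
      have h0s : 0 ≤ S x := le_trans hS₀.le h1s
      rw [abs_le]
      constructor <;> nlinarith [mul_nonneg (by linarith : (0:ℝ) ≤ 1-x) (sq_nonneg (S x))]
  set I := ∫ x in (0:ℝ)..1, S x with hIdef
  set J := ∫ x in (0:ℝ)..1, (1-x) * (S x)^2 with hJdef
  have hJlb : S₀^2/2 ≤ J := by
    have hmono : ∫ x in (0:ℝ)..1, (1-x)*S₀^2 ≤ J := by
      rw [hJdef]
      apply intervalIntegral.integral_mono_on (by norm_num)
        (Continuous.intervalIntegrable (by fun_prop) _ _) hWint
      intro x hx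
      obtain ⟨h1s, h2s⟩ := hbnd x hx
      have hx1 : 0 ≤ 1 - x := by linarith [hx.2]
      nlinarith [mul_nonneg hx1 (by nlinarith : (0:ℝ) ≤ (S x)^2 - S₀^2)]
    rw [integral_one_sub_mul] at hmono
    nlinarith
  have hJub : J ≤ S₁^2/2 := by
    have hmono : J ≤ ∫ x in (0:ℝ)..1, (1-x)*S₁^2 := by
      rw [hJdef]
      apply intervalIntegral.integral_mono_on (by norm_num) hWint
        (Continuous.intervalIntegrable (by fun_prop) _ _)
      intro x hx
      obtain ⟨h1s, h2s⟩ := hbnd x hx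
      have hx1 : 0 ≤ 1 - x := by linarith [hx.2]
      have h0s : 0 ≤ S x := le_trans hS₀.le h1s
      nlinarith [mul_nonneg hx1 (by nlinarith : (0:ℝ) ≤ S₁^2 - (S x)^2)]
    rw [integral_one_sub_mul] at hmono
    nlinarith
  have hJ0 : 0 < J := by nlinarith
  have hI0 : 0 ≤ I := by
    rw [hIdef]
    apply intervalIntegral.integral_nonneg (by norm_num)
    intro x hx
    exact le_trans hS₀.le (hbnd x hx).1
  set l := Real.sqrt (2*J/(1 + (1/2)*L)) with hldef
  have hl0 : 0 < l := Real.sqrt_pos.2 (by positivity)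
  have hlsq : l^2 = 2*J/(1 + (1/2)*L) := Real.sq_sqrt (by positivity)
  have hl2S₁ : l ≤ 2*S₁ := by
    have h1 : 2*J/(1 + (1/2)*L) ≤ S₁^2 := by
      rw [div_le_iff₀ hM0]; nlinarith
    have h2 : l ≤ S₁ := by
      rw [hldef, show S₁ = Real.sqrt (S₁^2) from (Real.sqrt_sq hS₁.le).symm]
      exact Real.sqrt_le_sqrt h1
    linarith
  have hkey := key_ineq S₀ S₁ l hS₀ hS₀S₁ hl0 hl2S₁ S hm hbnd
  rw [← hLdef, ← hIdef] at hkey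
  have hkey' : l * I ≤ J + (1 + (1/2)*L) * l^2/2 := by
    have : (∫ x in (0:ℝ)..1, (1-x) * S x^2) = J := by rw [hJdef]
    linarith [hkey, this.le, this.ge]
  have h2J : (1 + (1/2)*L) * l^2/2 = J := by
    rw [hlsq]; field_simp
  have hlI : l * I ≤ 2*J := by linarith
  have hIsq : I^2 * l^2 ≤ 4*J^2 := by nlinarith [mul_nonneg hl0.le hI0]
  have hfin : I^2 ≤ 2*J*(1 + (1/2)*L) := by
    rw [hlsq] at hIsq
    have h3 : I^2 * (2*J) ≤ 4*J^2*(1 + (1/2)*L) := by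
      have h4 := mul_le_mul_of_nonneg_right hIsq hM0.le
      calc I^2 * (2*J) = I^2 * (2*J/(1 + (1/2)*L)) * (1 + (1/2)*L) := by
            field_simp
        _ ≤ 4*J^2*(1 + (1/2)*L) := h4
    nlinarith
  unfold coolingFunctional
  rw [← hIdef, ← hJdef, div_le_iff₀ hJ0]
  linarith
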